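/- In the free semigroup F on two generators a and b, the set A = Fa (all words ending in a) is a J-set, but A^{-1}A is not an IP*-set in F: A^{-1}A does not intersect the IP-set generated by the sequence {b^n}_{n=1}^∞. -/

import Mathlib

namespace Stmt7

/-- The free semigroup on two generators. -/
abbrev F2 := FreeSemigroup Bool

/-- The generator `a`. -/
def genA : F2 := FreeSemigroup.of true

/-- The generator `b`. -/
def genB : F2 := FreeSemigroup.of false

/-- `A = Fa`, the set of words ending in `a`. -/
def A : Set F2 := {x | x = genA ∨ ∃ w : F2, x = w * genA}

/-- The (noncommutative) product of a list of semigroup elements, `none` iff empty. -/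
def listProd {S : Type*} [Semigroup S] : List S → Option S
  | [] => none
  | x :: l => some (l.foldl (· * ·) x)

/-- `A` is a J-set in the (not necessarily commutative) semigroup `S`: for every
finite family of sequences there exist `m ≥ 1`, increasing indices `t 0 < … < t (m-1)`
and elements `w 0, …, w m` such that for each `f` in the family the interleaved
product `w 0 * f (t 0) * w 1 * ⋯ * w (m-1) * f (t (m-1)) * w m` lies in `A`. -/
def IsJSetNC {S : Type*} [Semigroup S] (A : Set S) : Prop :=
  ∀ Fam : Finset (ℕ → S), ∃ m : ℕ, 0 < m ∧ ∃ t : Fin m → ℕ, StrictMono t ∧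
    ∃ w : Fin (m + 1) → S, ∀ f ∈ Fam, ∃ p,
      listProd ((List.ofFn fun i : Fin m => [w i.castSucc, f (t i)]).flatten
          ++ [w (Fin.last m)]) = some p ∧ p ∈ A

/-- `bpow n = b^(n+1)`. -/
def bpow : ℕ → F2
  | 0 => genB
  | n + 1 => bpow n * genB

/-- Bool with the "right projection" semigroup structure. -/
def RB := Bool

instance : Mul RB := ⟨fun _ y => y⟩
instance : Semigroup RB := { mul_assoc := fun _ _ _ => rfl }

/-- The "last letter" homomorphism. -/
def lastL : F2 →ₙ* RB := FreeSemigroup.lift id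

lemma lastL_mul (x y : F2) : lastL (x * y) = lastL y := map_mul lastL x y

lemma lastL_of_mem_A {x : F2} (hx : x ∈ A) : lastL x = true := by
  rcases hx with h | ⟨w, h⟩
  · rw [h]; exact FreeSemigroup.lift_of _ _
  · rw [h, lastL_mul]; exact FreeSemigroup.lift_of _ _

lemma lastL_bpow (n : ℕ) : lastL (bpow n) = false := by
  induction n with
  | zero => exact FreeSemigroup.lift_of _ _
  | succ n ih => rw [bpow, lastL_mul]; exact FreeSemigroup.lift_of _ _

lemma lastL_FP {s : Stream' F2} (hs : ∀ n, lastL (s n) = false) :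
    ∀ g ∈ Hindman.FP s, lastL g = false := by
  intro g hg
  induction hg with
  | head' a => exact hs 0
  | tail' a m h ih => exact ih (fun n => hs (n + 1))
  | cons' a m h ih => rw [lastL_mul]; exact ih (fun n => hs (n + 1))

/-- In the free semigroup on two generators `a, b`, the set `A = Fa` is a J-set, but
`A⁻¹A` is not an `IP⋆`-set: it misses the IP-set generated by `{b^n}_{n=1}^∞`. -/
theorem stmt_7 :
    IsJSetNC A ∧ ∀ g ∈ Hindman.FP (bpow : Stream' F2), ¬∃ u ∈ A, u * g ∈ A := by
  constructor
  · intro Fam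
    refine ⟨1, one_pos, ![0], ?_, ![genA, genA], ?_⟩
    · intro i j h
      have hi := i.is_lt
      have hj := j.is_lt
      have := Fin.lt_iff_val_lt_val.mp h
      omega
    · intro f _
      refine ⟨genA * f 0 * genA, ?_, Or.inr ⟨genA * f 0, rfl⟩⟩
      rfl
  · intro g hg ⟨u, hu, huA⟩
    have h1 : lastL (u * g) = true := lastL_of_mem_A huA
    rw [lastL_mul] at h1
    have h2 : lastL g = false := lastL_FP lastL_bpow g hg
    rw [h1] at h2
    simp at h2

end Stmt7
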